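/- For matrix measures μ induced by Lᵖ norms (p ∈ {1,2,∞}) and any A ∈ ℝ^{n×n}, B ∈ ℝ^{m×m}, the matrix measure of the Kronecker sum is additive: μ(A ⊕ B) = μ(A) + μ(B), where A ⊕ B := A ⊗ I_m + I_n ⊗ B. -/

import Mathlib

open Matrix Filter
open scoped ENNReal Kronecker

/-- The operator norm of a matrix acting on `ℝ^ι` equipped with the `Lᵖ` norm. -/
noncomputable def lpOpNorm (p : ENNReal) [Fact (1 ≤ p)] {ι : Type*} [Fintype ι]
    (A : Matrix ι ι ℝ) : ℝ :=
  ‖LinearMap.toContinuousLinearMap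
    (((WithLp.linearEquiv p ℝ (ι → ℝ)).symm.toLinearMap.comp
        A.mulVecLin).comp (WithLp.linearEquiv p ℝ (ι → ℝ)).toLinearMap)‖

/-- The Kronecker sum `A ⊕ B := A ⊗ I_m + I_n ⊗ B`. -/
noncomputable def kroneckerSum {ι κ : Type*} [Fintype ι] [Fintype κ]
    [DecidableEq ι] [DecidableEq κ] (A : Matrix ι ι ℝ) (B : Matrix κ κ ℝ) :
    Matrix (ι × κ) (ι × κ) ℝ :=
  Matrix.kroneckerMap (· * ·) A 1 + Matrix.kroneckerMap (· * ·) 1 B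

noncomputable def matCLM (p : ℝ≥0∞) [Fact (1 ≤ p)] {ι : Type*} [Fintype ι]
    (A : Matrix ι ι ℝ) : WithLp p (ι → ℝ) →L[ℝ] WithLp p (ι → ℝ) :=
  LinearMap.toContinuousLinearMap
    (((WithLp.linearEquiv p ℝ (ι → ℝ)).symm.toLinearMap.comp
        A.mulVecLin).comp (WithLp.linearEquiv p ℝ (ι → ℝ)).toLinearMap)

variable (p : ℝ≥0∞) [Fact (1 ≤ p)] {ι κ : Type*} [Fintype ι] [Fintype κ]

lemma lpOpNorm_eq (A : Matrix ι ι ℝ) : lpOpNorm p A = ‖matCLM p A‖ := rfl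

lemma matCLM_apply (A : Matrix ι ι ℝ) (x : WithLp p (ι → ℝ)) (i : ι) :
    matCLM p A x i = A.mulVec x i := rfl

lemma matCLM_mul (A B : Matrix ι ι ℝ) :
    matCLM p (A * B) = (matCLM p A).comp (matCLM p B) := by
  ext x i
  simp [matCLM_apply, ← Matrix.mulVec_mulVec]; rfl

lemma matCLM_one [DecidableEq ι] : matCLM p (1 : Matrix ι ι ℝ) = ContinuousLinearMap.id ℝ _ := by
  ext x i
  simp [matCLM_apply]

lemma matCLM_add (A B : Matrix ι ι ℝ) : matCLM p (A + B) = matCLM p A + matCLM p B := by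
  ext x i
  simp [matCLM_apply, Matrix.add_mulVec]

lemma matCLM_smul (c : ℝ) (A : Matrix ι ι ℝ) : matCLM p (c • A) = c • matCLM p A := by
  ext x i
  simp [matCLM_apply, Matrix.smul_mulVec]

lemma norm_rpow_eq (hp : p ≠ ∞) (f : WithLp p (ι → ℝ)) :
    ‖f‖ ^ p.toReal = ∑ i, ‖f i‖ ^ p.toReal := by
  have hq : 0 < p.toReal := ENNReal.toReal_pos (one_pos.trans_le (Fact.out : 1 ≤ p)).ne' hp
  have hS : (0:ℝ) ≤ ∑ i, ‖f i‖ ^ p.toReal := Finset.sum_nonneg fun i _ => by positivity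
  rw [PiLp.norm_eq_sum hq, ← Real.rpow_mul hS, one_div, inv_mul_cancel₀ hq.ne', Real.rpow_one]

lemma fin_ciSup_eq {α : Type*} [Fintype α] [Nonempty α] (f : α → ℝ) :
    ∃ a₀ : α, (⨆ a, f a) = f a₀ ∧ ∀ a, f a ≤ f a₀ := by
  obtain ⟨a₀, h⟩ := Finite.exists_max f
  exact ⟨a₀, le_antisymm (ciSup_le h) (le_ciSup (Set.Finite.bddAbove (Set.finite_range f)) a₀), h⟩

noncomputable def tensorLp (x : WithLp p (ι → ℝ)) (y : WithLp p (κ → ℝ)) :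
    WithLp p (ι × κ → ℝ) :=
  (WithLp.equiv p (ι × κ → ℝ)).symm (fun ik => x ik.1 * y ik.2)

lemma tensorLp_apply (x : WithLp p (ι → ℝ)) (y : WithLp p (κ → ℝ)) (ik : ι × κ) :
    tensorLp p x y ik = x ik.1 * y ik.2 := rfl

lemma norm_tensorLp (x : WithLp p (ι → ℝ)) (y : WithLp p (κ → ℝ)) :
    ‖tensorLp p x y‖ = ‖x‖ * ‖y‖ := by
  rcases eq_or_ne p ∞ with hp | hp
  · subst hp
    rw [PiLp.norm_eq_ciSup, PiLp.norm_eq_ciSup, PiLp.norm_eq_ciSup]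
    rcases isEmpty_or_nonempty ι with hι | hι
    · haveI : IsEmpty (ι × κ) := Prod.isEmpty_left
      simp [Real.iSup_of_isEmpty]
    rcases isEmpty_or_nonempty κ with hκ | hκ
    · haveI : IsEmpty (ι × κ) := Prod.isEmpty_right
      simp [Real.iSup_of_isEmpty]
    obtain ⟨i₀, hi₀, hi₀'⟩ := fin_ciSup_eq (fun i => ‖x i‖)
    obtain ⟨k₀, hk₀, hk₀'⟩ := fin_ciSup_eq (fun k => ‖y k‖)
    rw [hi₀, hk₀]
    apply le_antisymm
    · refine ciSup_le fun ik => ?_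
      rw [tensorLp_apply, norm_mul]
      exact mul_le_mul (hi₀' _) (hk₀' _) (norm_nonneg _) (norm_nonneg _)
    · have := le_ciSup (Set.Finite.bddAbove
        (Set.finite_range (fun ik : ι × κ => ‖tensorLp ∞ x y ik‖))) (i₀, k₀)
      simpa [tensorLp_apply, norm_mul] using this
  · have hq : 0 < p.toReal := ENNReal.toReal_pos (one_pos.trans_le (Fact.out : 1 ≤ p)).ne' hp
    have h1 : ‖tensorLp p x y‖ ^ p.toReal = (‖x‖ * ‖y‖) ^ p.toReal := by
      rw [norm_rpow_eq p hp, Real.mul_rpow (norm_nonneg _) (norm_nonneg _),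
        norm_rpow_eq p hp, norm_rpow_eq p hp, Finset.sum_mul_sum, Fintype.sum_prod_type]
      refine Finset.sum_congr rfl fun i _ => Finset.sum_congr rfl fun k _ => ?_
      rw [tensorLp_apply, norm_mul, Real.mul_rpow (norm_nonneg _) (norm_nonneg _)]
    exact le_antisymm
      ((Real.rpow_le_rpow_iff (norm_nonneg _) (by positivity) hq).mp h1.le)
      ((Real.rpow_le_rpow_iff (by positivity) (norm_nonneg _) hq).mp h1.ge)

lemma one_kron_mulVec [DecidableEq ι] (N : Matrix κ κ ℝ) (z : (ι × κ) → ℝ) (i : ι) (k : κ) :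
    (Matrix.kroneckerMap (· * ·) (1 : Matrix ι ι ℝ) N).mulVec z (i, k)
      = N.mulVec (fun l => z (i, l)) k := by
  simp [Matrix.mulVec, dotProduct, Fintype.sum_prod_type, Matrix.one_apply,
    ite_mul, zero_mul, one_mul]

lemma kron_one_mulVec [DecidableEq κ] (M : Matrix ι ι ℝ) (z : (ι × κ) → ℝ) (i : ι) (k : κ) :
    (Matrix.kroneckerMap (· * ·) M (1 : Matrix κ κ ℝ)).mulVec z (i, k)
      = M.mulVec (fun j => z (j, k)) i := by
  simp [Matrix.mulVec, dotProduct, Fintype.sum_prod_type, Matrix.one_apply,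
    mul_ite, ite_mul, zero_mul, mul_zero, mul_one]

lemma norm_reindex {α β : Type*} [Fintype α] [Fintype β]
    (f : WithLp p (α → ℝ)) (g : WithLp p (β → ℝ)) (e : α ≃ β)
    (h : ∀ a, f a = g (e a)) : ‖f‖ = ‖g‖ := by
  rcases eq_or_ne p ∞ with hp | hp
  · subst hp
    rw [PiLp.norm_eq_ciSup, PiLp.norm_eq_ciSup]
    refine le_antisymm ?_ ?_
    · refine Real.iSup_le (fun a => ?_) (Real.iSup_nonneg fun b => norm_nonneg _)
      rw [h a]
      exact le_ciSup (f := fun b => ‖g b‖) (Set.Finite.bddAbove (Set.finite_range _)) (e a)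
    · refine Real.iSup_le (fun b => ?_) (Real.iSup_nonneg fun a => norm_nonneg _)
      have : ‖g b‖ = ‖f (e.symm b)‖ := by rw [h (e.symm b), e.apply_symm_apply]
      rw [this]
      exact le_ciSup (f := fun a => ‖f a‖) (Set.Finite.bddAbove (Set.finite_range _)) (e.symm b)
  · have hq : 0 < p.toReal := ENNReal.toReal_pos (one_pos.trans_le (Fact.out : 1 ≤ p)).ne' hp
    have h1 : ‖f‖ ^ p.toReal = ‖g‖ ^ p.toReal := by
      rw [norm_rpow_eq p hp, norm_rpow_eq p hp]
      exact Fintype.sum_equiv e _ _ fun a => by rw [h a]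
    exact le_antisymm
      ((Real.rpow_le_rpow_iff (norm_nonneg _) (norm_nonneg _) hq).mp h1.le)
      ((Real.rpow_le_rpow_iff (norm_nonneg _) (norm_nonneg _) hq).mp h1.ge)

lemma opNorm_one_kron_le [DecidableEq ι] (N : Matrix κ κ ℝ) :
    ‖matCLM p (Matrix.kroneckerMap (· * ·) (1 : Matrix ι ι ℝ) N)‖ ≤ ‖matCLM p N‖ := by
  refine ContinuousLinearMap.opNorm_le_bound _ (norm_nonneg _) fun z => ?_
  set c := ‖matCLM p N‖ with hc
  have hc0 : 0 ≤ c := norm_nonneg _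
  set T := matCLM p (Matrix.kroneckerMap (· * ·) (1 : Matrix ι ι ℝ) N) with hT
  have hslice : ∀ i : ι, ∀ k : κ, T z (i, k)
      = matCLM p N ((WithLp.equiv p (κ → ℝ)).symm (fun l => z (i, l))) k := by
    intro i k
    exact one_kron_mulVec N _ i k
  rcases eq_or_ne p ∞ with hp | hp
  · subst hp
    rw [PiLp.norm_eq_ciSup]
    refine Real.iSup_le (fun ik => ?_) (by positivity)
    obtain ⟨i, k⟩ := ik
    set zi := (WithLp.equiv ∞ (κ → ℝ)).symm (fun l => z (i, l)) with hzi
    have h1 : ‖T z (i, k)‖ ≤ ‖matCLM ∞ N zi‖ := by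
      rw [hslice i k, PiLp.norm_eq_ciSup]
      exact le_ciSup (f := fun k' : κ => ‖matCLM ∞ N zi k'‖) (Set.Finite.bddAbove (Set.finite_range _)) k
    have h2 : ‖zi‖ ≤ ‖z‖ := by
      rw [PiLp.norm_eq_ciSup, PiLp.norm_eq_ciSup]
      refine Real.iSup_le (fun l => ?_) (Real.iSup_nonneg (f := fun ik : ι × κ => ‖z ik‖) fun _ => norm_nonneg _)
      exact le_ciSup (f := fun ik : ι × κ => ‖z ik‖) (Set.Finite.bddAbove (Set.finite_range _)) (i, l)
    calc ‖T z (i, k)‖ ≤ ‖matCLM ∞ N zi‖ := h1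
      _ ≤ c * ‖zi‖ := (matCLM ∞ N).le_opNorm zi
      _ ≤ c * ‖z‖ := by apply mul_le_mul_of_nonneg_left h2 hc0
  · have hq : 0 < p.toReal := ENNReal.toReal_pos (one_pos.trans_le (Fact.out : 1 ≤ p)).ne' hp
    have key : ‖T z‖ ^ p.toReal ≤ (c * ‖z‖) ^ p.toReal := by
      rw [norm_rpow_eq p hp]
      have hz : ‖z‖ ^ p.toReal = ∑ i : ι, ‖(WithLp.equiv p (κ → ℝ)).symm (fun l => z (i, l))‖
          ^ p.toReal := by
        rw [norm_rpow_eq p hp, Fintype.sum_prod_type]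
        exact Finset.sum_congr rfl fun i _ => (norm_rpow_eq p hp ((WithLp.equiv p (κ → ℝ)).symm fun l => z (i, l))).symm
      calc ∑ ik : ι × κ, ‖T z ik‖ ^ p.toReal
          = ∑ i : ι, ‖matCLM p N ((WithLp.equiv p (κ → ℝ)).symm (fun l => z (i, l)))‖
              ^ p.toReal := by
            rw [Fintype.sum_prod_type]
            refine Finset.sum_congr rfl fun i _ => ?_
            rw [norm_rpow_eq p hp]
            exact Finset.sum_congr rfl fun k _ => by rw [hslice i k]
        _ ≤ ∑ i : ι, (c * ‖(WithLp.equiv p (κ → ℝ)).symm (fun l => z (i, l))‖) ^ p.toReal := by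
            refine Finset.sum_le_sum fun i _ => ?_
            exact Real.rpow_le_rpow (norm_nonneg _) ((matCLM p N).le_opNorm _) hq.le
        _ = (c * ‖z‖) ^ p.toReal := by
            rw [Real.mul_rpow hc0 (norm_nonneg _), hz, Finset.mul_sum]
            exact Finset.sum_congr rfl fun i _ => Real.mul_rpow hc0 (norm_nonneg _)
    exact (Real.rpow_le_rpow_iff (norm_nonneg _) (by positivity) hq).mp key

lemma opNorm_kron_one_le [DecidableEq κ] (M : Matrix ι ι ℝ) :
    ‖matCLM p (Matrix.kroneckerMap (· * ·) M (1 : Matrix κ κ ℝ))‖ ≤ ‖matCLM p M‖ := by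
  refine ContinuousLinearMap.opNorm_le_bound _ (norm_nonneg _) fun z => ?_
  set w := (WithLp.equiv p ((κ × ι) → ℝ)).symm (fun ki => z (ki.2, ki.1)) with hw
  have h1 : ‖matCLM p (Matrix.kroneckerMap (· * ·) M (1 : Matrix κ κ ℝ)) z‖
      = ‖matCLM p (Matrix.kroneckerMap (· * ·) (1 : Matrix κ κ ℝ) M) w‖ := by
    refine norm_reindex p _ _ (Equiv.prodComm ι κ) ?_
    rintro ⟨i, k⟩
    show (Matrix.kroneckerMap (· * ·) M (1 : Matrix κ κ ℝ)).mulVec z (i, k)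
      = (Matrix.kroneckerMap (· * ·) (1 : Matrix κ κ ℝ) M).mulVec _ (k, i)
    rw [kron_one_mulVec, one_kron_mulVec]
    rfl
  have h2 : ‖w‖ = ‖z‖ := by
    refine norm_reindex p _ _ (Equiv.prodComm κ ι) ?_
    rintro ⟨k, i⟩
    rfl
  calc ‖matCLM p (Matrix.kroneckerMap (· * ·) M (1 : Matrix κ κ ℝ)) z‖
      = ‖matCLM p (Matrix.kroneckerMap (· * ·) (1 : Matrix κ κ ℝ) M) w‖ := h1
    _ ≤ ‖matCLM p (Matrix.kroneckerMap (· * ·) (1 : Matrix κ κ ℝ) M)‖ * ‖w‖ :=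
        ContinuousLinearMap.le_opNorm _ _
    _ ≤ ‖matCLM p M‖ * ‖z‖ := by
        rw [h2]
        exact mul_le_mul_of_nonneg_right (opNorm_one_kron_le p M) (norm_nonneg _)

lemma matCLM_kron_tensor (M : Matrix ι ι ℝ) (N : Matrix κ κ ℝ)
    (x : WithLp p (ι → ℝ)) (y : WithLp p (κ → ℝ)) :
    matCLM p (Matrix.kroneckerMap (· * ·) M N) (tensorLp p x y)
      = tensorLp p (matCLM p M x) (matCLM p N y) := by
  apply (WithLp.equiv p ((ι × κ) → ℝ)).injective
  funext ik
  obtain ⟨i, k⟩ := ik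
  show (Matrix.kroneckerMap (· * ·) M N).mulVec (fun jl : ι × κ => x jl.1 * y jl.2) (i, k)
    = M.mulVec (fun j => x j) i * N.mulVec (fun l => y l) k
  simp only [Matrix.mulVec, dotProduct, Fintype.sum_prod_type, Matrix.kroneckerMap_apply,
    Finset.sum_mul_sum]
  exact Finset.sum_congr rfl fun j _ => Finset.sum_congr rfl fun l _ => by ring

lemma opNorm_kron_le [DecidableEq ι] [DecidableEq κ] (M : Matrix ι ι ℝ) (N : Matrix κ κ ℝ) :
    ‖matCLM p (Matrix.kroneckerMap (· * ·) M N)‖ ≤ ‖matCLM p M‖ * ‖matCLM p N‖ := by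
  have hfac : Matrix.kroneckerMap (· * ·) M N
      = Matrix.kroneckerMap (· * ·) M (1 : Matrix κ κ ℝ)
        * Matrix.kroneckerMap (· * ·) (1 : Matrix ι ι ℝ) N := by
    rw [← Matrix.mul_kronecker_mul, Matrix.mul_one, Matrix.one_mul]
  rw [hfac, matCLM_mul]
  calc ‖(matCLM p (Matrix.kroneckerMap (· * ·) M (1 : Matrix κ κ ℝ))).comp
        (matCLM p (Matrix.kroneckerMap (· * ·) (1 : Matrix ι ι ℝ) N))‖
      ≤ ‖matCLM p (Matrix.kroneckerMap (· * ·) M (1 : Matrix κ κ ℝ))‖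
        * ‖matCLM p (Matrix.kroneckerMap (· * ·) (1 : Matrix ι ι ℝ) N)‖ :=
        ContinuousLinearMap.opNorm_comp_le _ _
    _ ≤ ‖matCLM p M‖ * ‖matCLM p N‖ :=
        mul_le_mul (opNorm_kron_one_le p M) (opNorm_one_kron_le p N) (norm_nonneg _)
          (norm_nonneg _)

lemma opNorm_kron_ge (M : Matrix ι ι ℝ) (N : Matrix κ κ ℝ) :
    ‖matCLM p M‖ * ‖matCLM p N‖ ≤ ‖matCLM p (Matrix.kroneckerMap (· * ·) M N)‖ := by
  set T := matCLM p (Matrix.kroneckerMap (· * ·) M N) with hT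
  have key : ∀ (x : WithLp p (ι → ℝ)) (y : WithLp p (κ → ℝ)),
      ‖matCLM p M x‖ * ‖matCLM p N y‖ ≤ ‖T‖ * ‖x‖ * ‖y‖ := by
    intro x y
    have := T.le_opNorm (tensorLp p x y)
    rw [matCLM_kron_tensor, norm_tensorLp, norm_tensorLp] at this
    calc ‖matCLM p M x‖ * ‖matCLM p N y‖ ≤ ‖T‖ * (‖x‖ * ‖y‖) := this
      _ = ‖T‖ * ‖x‖ * ‖y‖ := by ring
  have step1 : ∀ x : WithLp p (ι → ℝ), ‖matCLM p M x‖ * ‖matCLM p N‖ ≤ ‖T‖ * ‖x‖ := by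
    intro x
    rcases eq_or_lt_of_le (norm_nonneg (matCLM p M x)) with h0 | h0
    · rw [← h0, zero_mul]
      positivity
    · have hb : ‖matCLM p N‖ ≤ ‖T‖ * ‖x‖ / ‖matCLM p M x‖ := by
        refine ContinuousLinearMap.opNorm_le_bound _ (by positivity) fun y => ?_
        rw [div_mul_eq_mul_div, le_div_iff₀ h0]
        calc ‖matCLM p N y‖ * ‖matCLM p M x‖ = ‖matCLM p M x‖ * ‖matCLM p N y‖ := by ring
          _ ≤ ‖T‖ * ‖x‖ * ‖y‖ := key x y
          _ = ‖T‖ * ‖x‖ * ‖y‖ := rfl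
      calc ‖matCLM p M x‖ * ‖matCLM p N‖
          ≤ ‖matCLM p M x‖ * (‖T‖ * ‖x‖ / ‖matCLM p M x‖) :=
            mul_le_mul_of_nonneg_left hb h0.le
        _ = ‖T‖ * ‖x‖ := by field_simp
  rcases eq_or_lt_of_le (norm_nonneg (matCLM p N)) with h0 | h0
  · rw [← h0, mul_zero]
    positivity
  · have hb : ‖matCLM p M‖ ≤ ‖T‖ / ‖matCLM p N‖ := by
      refine ContinuousLinearMap.opNorm_le_bound _ (by positivity) fun x => ?_
      rw [div_mul_eq_mul_div, le_div_iff₀ h0]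
      exact step1 x
    calc ‖matCLM p M‖ * ‖matCLM p N‖ ≤ (‖T‖ / ‖matCLM p N‖) * ‖matCLM p N‖ :=
          mul_le_mul_of_nonneg_right hb h0.le
      _ = ‖T‖ := by field_simp

lemma opNorm_kron [DecidableEq ι] [DecidableEq κ] (M : Matrix ι ι ℝ) (N : Matrix κ κ ℝ) :
    ‖matCLM p (Matrix.kroneckerMap (· * ·) M N)‖ = ‖matCLM p M‖ * ‖matCLM p N‖ :=
  le_antisymm (opNorm_kron_le p M N) (opNorm_kron_ge p M N)

/-- For matrix measures `μ` induced by `Lᵖ` norms (`p ∈ {1,2,∞}`), the matrix measure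
of the Kronecker sum is additive: `μ(A ⊕ B) = μ(A) + μ(B)`.  Here the matrix measure
of `M` is the value `μ` such that `(‖I + εM‖ − 1)/ε → μ` as `ε → 0⁺`. -/
theorem mu_kroneckerSum (p : ENNReal) [Fact (1 ≤ p)]
    (hp : p = 1 ∨ p = 2 ∨ p = ⊤) {n m : ℕ}
    (A : Matrix (Fin n) (Fin n) ℝ) (B : Matrix (Fin m) (Fin m) ℝ)
    (muA muB muAB : ℝ)
    (hA : Tendsto (fun ε : ℝ => (lpOpNorm p (1 + ε • A) - 1) / ε)
      (nhdsWithin 0 (Set.Ioi 0)) (nhds muA))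
    (hB : Tendsto (fun ε : ℝ => (lpOpNorm p (1 + ε • B) - 1) / ε)
      (nhdsWithin 0 (Set.Ioi 0)) (nhds muB))
    (hAB : Tendsto (fun ε : ℝ => (lpOpNorm p (1 + ε • kroneckerSum A B) - 1) / ε)
      (nhdsWithin 0 (Set.Ioi 0)) (nhds muAB)) :
    muAB = muA + muB := by
  set l := nhdsWithin (0:ℝ) (Set.Ioi 0) with hl
  set C : ℝ := ‖matCLM p (Matrix.kroneckerMap (· * ·) A B)‖ with hC
  have hC0 : 0 ≤ C := norm_nonneg _
  -- matrix identity
  have hK : ∀ ε : ℝ,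
      Matrix.kroneckerMap (· * ·) ((1 : Matrix (Fin n) (Fin n) ℝ) + ε • A)
        ((1 : Matrix (Fin m) (Fin m) ℝ) + ε • B)
      = (1 : Matrix (Fin n × Fin m) (Fin n × Fin m) ℝ) + ε • kroneckerSum A B
        + (ε * ε) • Matrix.kroneckerMap (· * ·) A B := by
    intro ε
    show ((1 : Matrix (Fin n) (Fin n) ℝ) + ε • A) ⊗ₖ ((1 : Matrix (Fin m) (Fin m) ℝ) + ε • B) = _
    rw [Matrix.add_kronecker, Matrix.kronecker_add, Matrix.kronecker_add,
      Matrix.one_kronecker_one, Matrix.smul_kronecker, Matrix.smul_kronecker,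
      Matrix.kronecker_smul, Matrix.kronecker_smul, kroneckerSum, smul_add, smul_smul]
    show _ = 1 + (ε • A ⊗ₖ (1:Matrix (Fin m) (Fin m) ℝ) + ε • (1:Matrix (Fin n) (Fin n) ℝ) ⊗ₖ B)
      + (ε * ε) • A ⊗ₖ B
    abel
  -- norm identity
  have hnorm : ∀ ε : ℝ,
      |lpOpNorm p (1 + ε • kroneckerSum A B)
        - lpOpNorm p (1 + ε • A) * lpOpNorm p (1 + ε • B)| ≤ (ε * ε) * C := by
    intro ε
    have h1 : lpOpNorm p (1 + ε • A) * lpOpNorm p (1 + ε • B)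
        = ‖matCLM p (1 + ε • kroneckerSum A B) + (ε * ε) • matCLM p (Matrix.kroneckerMap (· * ·) A B)‖ := by
      rw [lpOpNorm_eq, lpOpNorm_eq, ← opNorm_kron, hK ε, matCLM_add, matCLM_smul]
    rw [h1, lpOpNorm_eq]
    set X : WithLp p ((Fin n × Fin m) → ℝ) →L[ℝ] WithLp p ((Fin n × Fin m) → ℝ) :=
      matCLM p (1 + ε • kroneckerSum A B) with hX
    set Y : WithLp p ((Fin n × Fin m) → ℝ) →L[ℝ] WithLp p ((Fin n × Fin m) → ℝ) :=
      matCLM p (Matrix.kroneckerMap (· * ·) A B) with hY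
    have h3 : |‖X‖ - ‖X + (ε * ε) • Y‖| ≤ ‖X - (X + (ε * ε) • Y)‖ := abs_norm_sub_norm_le _ _
    have h2 : X - (X + (ε * ε) • Y) = -((ε * ε) • Y) := by abel
    rw [h2, norm_neg] at h3
    refine h3.trans ?_
    have h4 : ‖(ε * ε) • Y‖ ≤ ‖ε * ε‖ * ‖Y‖ := ContinuousLinearMap.opNorm_smul_le _ _
    calc ‖(ε * ε) • Y‖ ≤ ‖ε * ε‖ * ‖Y‖ := h4
      _ = ε * ε * C := by rw [Real.norm_eq_abs, abs_mul_self ε, hC]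
  -- g → 1
  have hid : Tendsto (fun ε : ℝ => ε) l (nhds 0) := tendsto_id.mono_left nhdsWithin_le_nhds
  have hg1 : Tendsto (fun ε : ℝ => lpOpNorm p (1 + ε • B)) l (nhds 1) := by
    have heq : ∀ᶠ ε in l, 1 + ε * ((lpOpNorm p (1 + ε • B) - 1) / ε)
        = lpOpNorm p (1 + ε • B) := by
      filter_upwards [self_mem_nhdsWithin] with ε (hε : ε ∈ Set.Ioi 0)
      rw [mul_div_cancel₀ _ (ne_of_gt hε)]
      ring
    have : Tendsto (fun ε : ℝ => 1 + ε * ((lpOpNorm p (1 + ε • B) - 1) / ε)) l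
        (nhds (1 + 0 * muB)) := tendsto_const_nhds.add (hid.mul hB)
    rw [zero_mul, add_zero] at this
    exact Tendsto.congr' heq this
  -- product quotient limit
  have h_prod : Tendsto (fun ε : ℝ =>
      (lpOpNorm p (1 + ε • A) * lpOpNorm p (1 + ε • B) - 1) / ε) l (nhds (muA + muB)) := by
    have heq : (fun ε : ℝ => (lpOpNorm p (1 + ε • A) * lpOpNorm p (1 + ε • B) - 1) / ε)
        = fun ε : ℝ => ((lpOpNorm p (1 + ε • A) - 1) / ε) * lpOpNorm p (1 + ε • B)
          + (lpOpNorm p (1 + ε • B) - 1) / ε := by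
      funext ε
      rw [div_mul_eq_mul_div, ← add_div]
      ring_nf
    rw [heq]
    have := (hA.mul hg1).add hB
    rw [mul_one] at this
    exact this
  -- error term
  have h_err : Tendsto (fun ε : ℝ =>
      (lpOpNorm p (1 + ε • kroneckerSum A B) - 1) / ε
        - (lpOpNorm p (1 + ε • A) * lpOpNorm p (1 + ε • B) - 1) / ε) l (nhds 0) := by
    apply squeeze_zero_norm' (a := fun ε : ℝ => ε * C)
    · filter_upwards [self_mem_nhdsWithin] with ε (hε : ε ∈ Set.Ioi 0)
      have hε' : (0:ℝ) < ε := hε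
      rw [div_sub_div_same, sub_sub_sub_cancel_right, Real.norm_eq_abs, abs_div,
        abs_of_pos hε', div_le_iff₀ hε']
      calc |lpOpNorm p (1 + ε • kroneckerSum A B)
          - lpOpNorm p (1 + ε • A) * lpOpNorm p (1 + ε • B)| ≤ (ε * ε) * C := hnorm ε
        _ = ε * C * ε := by ring
    · have : Tendsto (fun ε : ℝ => ε * C) l (nhds (0 * C)) := hid.mul tendsto_const_nhds
      rwa [zero_mul] at this
  -- combine
  have htot : Tendsto (fun ε : ℝ =>
      (lpOpNorm p (1 + ε • kroneckerSum A B) - 1) / ε) l (nhds (muA + muB)) := by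
    have := h_err.add h_prod
    rw [zero_add] at this
    simpa using this
  exact tendsto_nhds_unique hAB htot
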